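/- For any finite poset P and distinct elements p, p' ∈ P, the piecewise-linear toggles τ_p and τ_{p'} on the order polytope O(P) commute if and only if p and p' do not share a cover relation in P (i.e., neither p⋖p' nor p'⋖p). -/

import Mathlib

open scoped Classical

/-- The poset `V` on `{A, B, C}` with cover relations `A ⋖ B` and `A ⋖ C`. -/
inductive V : Type
  | A | B | C
deriving DecidableEq

instance : Fintype V where
  elems := {V.A, V.B, V.C}
  complete x := by cases x <;> simp

instance : PartialOrder V where
  le x y := x = y ∨ x = V.A
  le_refl x := Or.inl rfl
  le_trans x y z h1 h2 := by
    rcases h1 with rfl | rfl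
    · exact h2
    · exact Or.inr rfl
  le_antisymm x y h1 h2 := by
    rcases h1 with rfl | rfl
    · rfl
    · rcases h2 with rfl | rfl <;> rfl

/-- Membership in the order polytope `O(P)`: order-preserving maps `P → [0,1]`. -/
def IsOP {P : Type*} [PartialOrder P] (f : P → ℝ) : Prop :=
  Monotone f ∧ ∀ x, 0 ≤ f x ∧ f x ≤ 1

/-- The piecewise-linear toggle `τ_p` on the order polytope: the value at `p` is replaced by
`min{f(r) : p ⋖ r in P̂} + max{f(r) : r ⋖ p in P̂} − f(p)`, where `P̂ = P ∪ {0̂, 1̂}` with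
`f(0̂) = 0` and `f(1̂) = 1` (so `1` resp. `0` are included in the min resp. max). -/
noncomputable def pwlToggle {P : Type*} [PartialOrder P] (p : P) (f : P → ℝ) : P → ℝ :=
  fun x =>
    if x = p then
      sInf ({1} ∪ f '' {r | p ⋖ r}) + sSup ({0} ∪ f '' {r | r ⋖ p}) - f p
    else f x

/-- `L` lists the elements of the poset in the order of a linear extension. -/
def IsLinExt {P : Type*} [PartialOrder P] (L : List P) : Prop :=
  L.Nodup ∧ (∀ x, x ∈ L) ∧ ∀ i j : Fin L.length, L.get i < L.get j → i < j

/-- Piecewise-linear rowmotion `row = τ_{p_1} ∘ τ_{p_2} ∘ ⋯ ∘ τ_{p_m}` for a linear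
extension `(p_1, …, p_m)`. -/
noncomputable def pwlRow {P : Type*} [PartialOrder P] (L : List P) (f : P → ℝ) : P → ℝ :=
  L.foldr pwlToggle f

/-- The automorphism of `V` fixing `A` and swapping `B` and `C`. -/
def Vflip : V → V
  | V.A => V.A
  | V.B => V.C
  | V.C => V.B

lemma pwlToggle_ne {P : Type*} [PartialOrder P] (p : P) (f : P → ℝ) {x : P} (h : x ≠ p) :
    pwlToggle p f x = f x := if_neg h

lemma pwlToggle_self {P : Type*} [PartialOrder P] (p : P) (f : P → ℝ) :
    pwlToggle p f p =
      sInf ({1} ∪ f '' {r | p ⋖ r}) + sSup ({0} ∪ f '' {r | r ⋖ p}) - f p := if_pos rfl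

lemma mySSup_eq {s : Set ℝ} {a : ℝ} (ha : a ∈ s) (h : ∀ x ∈ s, x ≤ a) : sSup s = a :=
  le_antisymm (csSup_le ⟨a, ha⟩ h) (le_csSup ⟨a, h⟩ ha)

lemma mySInf_eq {s : Set ℝ} {a : ℝ} (ha : a ∈ s) (h : ∀ x ∈ s, a ≤ x) : sInf s = a :=
  le_antisymm (csInf_le ⟨a, h⟩ ha) (le_csInf ⟨a, ha⟩ h)

lemma aux_ne {P : Type*} [PartialOrder P] [Fintype P] (p q : P) (hpq : p ⋖ q) :
    ∃ f : P → ℝ, IsOP f ∧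
      pwlToggle p (pwlToggle q f) q ≠ pwlToggle q (pwlToggle p f) q := by
  set f : P → ℝ := fun x => if p ≤ x then 1/2 else 0 with hfdef
  have hlb : ∀ x, (0:ℝ) ≤ f x := by intro x; simp only [hfdef]; split <;> norm_num
  have hub : ∀ x, f x ≤ 1/2 := by intro x; simp only [hfdef]; split <;> norm_num
  have hfge : ∀ x, p ≤ x → f x = 1/2 := by intro x hx; simp only [hfdef, if_pos hx]
  have hfnot : ∀ x, ¬ p ≤ x → f x = 0 := by intro x hx; simp only [hfdef, if_neg hx]
  have hfp : f p = 1/2 := hfge p le_rfl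
  have hfq : f q = 1/2 := hfge q hpq.le
  refine ⟨f, ⟨?_, fun x => ⟨hlb x, (hub x).trans (by norm_num)⟩⟩, ?_⟩
  · intro x y hxy
    by_cases hx : p ≤ x
    · rw [hfge x hx, hfge y (hx.trans hxy)]
    · rw [hfnot x hx]; exact hlb y
  have hqp : q ≠ p := hpq.ne'
  set A := sInf ({1} ∪ f '' {r | q ⋖ r}) with hA
  have hB : sSup ({0} ∪ f '' {r | r ⋖ q}) = 1/2 := by
    refine mySSup_eq ?_ ?_
    · exact Set.mem_union_right _ ⟨p, hpq, hfp⟩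
    intro y hy
    rcases Set.mem_union _ _ _ |>.mp hy with hy | ⟨r, _, rfl⟩
    · rw [Set.mem_singleton_iff.mp hy]; norm_num
    · exact hub r
  set g := pwlToggle p f with hg
  have hgp : g p = 0 := by
    rw [hg, pwlToggle_self]
    have h1 : sInf ({1} ∪ f '' {r | p ⋖ r}) = 1/2 := by
      refine mySInf_eq ?_ ?_
      · exact Set.mem_union_right _ ⟨q, hpq, hfq⟩
      intro y hy
      rcases Set.mem_union _ _ _ |>.mp hy with hy | ⟨r, hr, rfl⟩
      · rw [Set.mem_singleton_iff.mp hy]; norm_num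
      · rw [hfge r hr.le]
    have h2 : sSup ({0} ∪ f '' {r | r ⋖ p}) = 0 := by
      refine mySSup_eq ?_ ?_
      · exact Set.mem_union_left _ rfl
      intro y hy
      rcases Set.mem_union _ _ _ |>.mp hy with hy | ⟨r, hr, rfl⟩
      · rw [Set.mem_singleton_iff.mp hy]
      · rw [hfnot r (fun hle => absurd (hle.trans_lt hr.lt) (lt_irrefl p))]
    rw [h1, h2, hfp]; ring
  have hLHS : pwlToggle p (pwlToggle q f) q = A := by
    rw [pwlToggle_ne p _ hqp, pwlToggle_self, hB, hfq, ← hA]; ring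
  have hgq : g q = 1/2 := by rw [hg, pwlToggle_ne p f hqp, hfq]
  have hRHS : pwlToggle q g q = A - 1/2 := by
    rw [pwlToggle_self]
    have himg : g '' {r | q ⋖ r} = f '' {r | q ⋖ r} := by
      apply Set.image_congr
      intro r hr
      exact pwlToggle_ne p f (fun h => absurd (h ▸ hr.lt) (fun hc => asymm hpq.lt hc))
    have hsup : sSup ({0} ∪ g '' {r | r ⋖ q}) = 0 := by
      refine mySSup_eq ?_ ?_
      · exact Set.mem_union_left _ rfl
      intro y hy
      rcases Set.mem_union _ _ _ |>.mp hy with hy | ⟨r, hr, rfl⟩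
      · rw [Set.mem_singleton_iff.mp hy]
      · by_cases hrp : r = p
        · rw [hrp, hgp]
        · rw [hg, pwlToggle_ne p f hrp]
          refine le_of_eq (hfnot r fun hle => ?_)
          exact hpq.2 (lt_of_le_of_ne hle (Ne.symm hrp)) hr.lt
    rw [himg, hsup, hgq, ← hA]; ring
  rw [hLHS, hRHS]
  intro h; linarith

lemma toggle_comm_of_no_cover {P : Type*} [PartialOrder P] (p p' : P) (hne : p ≠ p')
    (hnc : ¬(p ⋖ p' ∨ p' ⋖ p)) (f : P → ℝ) :
    pwlToggle p (pwlToggle p' f) = pwlToggle p' (pwlToggle p f) := by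
  have key : ∀ a b : P, a ≠ b → ¬ a ⋖ b → ¬ b ⋖ a →
      pwlToggle a (pwlToggle b f) a = pwlToggle a f a := by
    intro a b hab h1 h2
    rw [pwlToggle_self, pwlToggle_self]
    have e1 : (pwlToggle b f) '' {r | a ⋖ r} = f '' {r | a ⋖ r} := by
      apply Set.image_congr
      intro r hr
      exact pwlToggle_ne b f (fun h => h1 (h ▸ hr))
    have e2 : (pwlToggle b f) '' {r | r ⋖ a} = f '' {r | r ⋖ a} := by
      apply Set.image_congr
      intro r hr
      exact pwlToggle_ne b f (fun h => h2 (h ▸ hr))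
    rw [e1, e2, pwlToggle_ne b f hab]
  have hpp' : ¬ p ⋖ p' := fun h => hnc (Or.inl h)
  have hp'p : ¬ p' ⋖ p := fun h => hnc (Or.inr h)
  funext x
  by_cases hxp : x = p
  · subst hxp
    rw [pwlToggle_ne p' _ hne, key x p' hne hpp' hp'p]
  · by_cases hxp' : x = p'
    · subst hxp'
      rw [pwlToggle_ne p _ hne.symm, key x p hne.symm hp'p hpp']
    · rw [pwlToggle_ne p _ hxp, pwlToggle_ne p' _ hxp',
        pwlToggle_ne p' _ hxp', pwlToggle_ne p _ hxp]

/-- For distinct `p, p'` in a finite poset `P`, the piecewise-linear toggles `τ_p` and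
`τ_{p'}` commute on `O(P)` if and only if `p` and `p'` do not share a cover relation. -/
theorem stmt13 (P : Type*) [PartialOrder P] [Fintype P] (p p' : P) (hne : p ≠ p') :
    (∀ f : P → ℝ, IsOP f →
        pwlToggle p (pwlToggle p' f) = pwlToggle p' (pwlToggle p f)) ↔
      ¬(p ⋖ p' ∨ p' ⋖ p) := by
  constructor
  · intro H hcov
    rcases hcov with h | h
    · obtain ⟨f, hf, hne'⟩ := aux_ne p p' h
      exact hne' (congrFun (H f hf) p')
    · obtain ⟨f, hf, hne'⟩ := aux_ne p' p h
      exact hne' (congrFun (H f hf) p).symm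
  · intro hnc f _
    exact toggle_comm_of_no_cover p p' hne hnc f
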